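/- Assume Re b₁ > 0. Define K(X,Y) = Σ_{m,n≥0} (a)_{m+n} (b₂)_n (−1)^{m k₁} (−t₁)_{m k₁} (−1)^{n k₂} (−t₂)_{n k₂} X^m Y^n / ((c₁)_m (c₂)_n m! n!) (a finite sum). Then 𝓕₂⁽¹⁾(a,b₁,b₂;c₁,c₂;t₁,t₂,k₁,k₂,x,y) = (1/Γ(b₁)) · ∫₀^∞ e^{−u} u^{b₁−1} K(u·x, y) du, where u^{b₁−1} is defined via the real logarithm on (0,∞). -/

import Mathlib

open Complex Finset

/-- Ascending Pochhammer symbol `(z)_j = z (z+1) ⋯ (z+j−1)`, with `(z)_0 = 1`. -/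
noncomputable def poch (z : ℂ) (j : ℕ) : ℂ := (ascPochhammer ℂ j).eval z

/-- The first discrete Appell function `𝓕₂⁽¹⁾(a,b₁,b₂;c₁,c₂;t₁,t₂,k₁,k₂,x,y)`.
Since `(−t₁)_{m k₁} = 0` once `m k₁ > t₁` and `(−t₂)_{n k₂} = 0` once `n k₂ > t₂`
(for `k₁, k₂ ≥ 1`), the doubly infinite sum reduces to this finite sum. -/
noncomputable def F2one (a b₁ b₂ c₁ c₂ : ℂ) (t₁ t₂ k₁ k₂ : ℕ) (x y : ℂ) : ℂ :=
  ∑ m ∈ Finset.range (t₁ + 1), ∑ n ∈ Finset.range (t₂ + 1),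
    poch a (m + n) * poch b₁ m * poch b₂ n * (-1 : ℂ) ^ (m * k₁) * poch (-(t₁ : ℂ)) (m * k₁)
      * (-1 : ℂ) ^ (n * k₂) * poch (-(t₂ : ℂ)) (n * k₂) * x ^ m * y ^ n
    / (poch c₁ m * poch c₂ n * (Nat.factorial m : ℂ) * (Nat.factorial n : ℂ))

open MeasureTheory

lemma poch_succ (b : ℂ) (m : ℕ) : poch b (m+1) = poch b m * (b + m) := by
  simp [poch, ascPochhammer_succ_right]

lemma gamma_poch (b : ℂ) (hb : 0 < b.re) (m : ℕ) :
    Complex.Gamma (b + m) = poch b m * Complex.Gamma b := by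
  induction m with
  | zero => simp [poch]
  | succ m ih =>
    have hne : b + m ≠ 0 := by
      intro h
      have : (b + m).re = 0 := by rw [h]; simp
      simp only [Complex.add_re, Complex.natCast_re] at this
      have h1 : b.re = -m := by linarith
      have h2 : (0:ℝ) < -(m:ℝ) := by rw [← h1]; exact hb
      have : (0:ℝ) ≤ (m:ℝ) := Nat.cast_nonneg m
      linarith
    have key : Complex.Gamma ((b + m) + 1) = (b + m) * Complex.Gamma (b + m) :=
      Complex.Gamma_add_one _ hne
    rw [show ((m+1 : ℕ) : ℂ) = (m : ℂ) + 1 by push_cast; ring, ← add_assoc, key, ih, poch_succ]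
    ring

lemma gamma_int (b : ℂ) (hb : 0 < b.re) (m : ℕ) :
    IntegrableOn (fun u : ℝ => Complex.exp (-(u:ℂ)) * (u:ℂ) ^ (b-1) * (u:ℂ) ^ m) (Set.Ioi 0) ∧
    (∫ u in Set.Ioi (0:ℝ), Complex.exp (-(u:ℂ)) * (u:ℂ) ^ (b-1) * (u:ℂ) ^ m)
      = Complex.Gamma (b + m) := by
  have hbm : 0 < (b + m).re := by
    simp only [Complex.add_re, Complex.natCast_re]
    have : (0:ℝ) ≤ (m:ℝ) := Nat.cast_nonneg m
    linarith
  have heq : Set.EqOn (fun u : ℝ => Complex.exp (-(u:ℂ)) * (u:ℂ) ^ (b-1) * (u:ℂ) ^ m)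
      (fun u : ℝ => (Real.exp (-u) : ℂ) * (u:ℂ) ^ ((b + m) - 1)) (Set.Ioi 0) := by
    intro u hu
    have hu0 : (u:ℂ) ≠ 0 := Complex.ofReal_ne_zero.mpr (ne_of_gt hu)
    simp only
    rw [show ((b + m) - 1 : ℂ) = (b - 1) + m by ring,
      Complex.cpow_add _ _ hu0, Complex.cpow_natCast,
      ← Complex.ofReal_neg, Complex.ofReal_exp, mul_assoc]
  constructor
  · exact (Complex.GammaIntegral_convergent hbm).congr_fun (fun u hu => (heq hu).symm)
      measurableSet_Ioi
  · rw [setIntegral_congr_fun measurableSet_Ioi heq]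
    exact (Complex.Gamma_eq_integral hbm).symm

/-- Laplace-type integral representation of `𝓕₂⁽¹⁾` with respect to the parameter `b₁`. -/
theorem integral_representation_laplace_b1 (a b₁ b₂ c₁ c₂ x y : ℂ) (k₁ k₂ : ℕ)
    (hk₁ : 0 < k₁) (hk₂ : 0 < k₂)
    (hc₁ : ∀ n : ℕ, c₁ ≠ -(n : ℂ)) (hc₂ : ∀ n : ℕ, c₂ ≠ -(n : ℂ))
    (t₁ t₂ : ℕ) (hb₁ : 0 < b₁.re)
    (K : ℂ → ℂ → ℂ)
    (hK : ∀ X Y : ℂ, K X Y =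
      ∑ m ∈ Finset.range (t₁ + 1), ∑ n ∈ Finset.range (t₂ + 1),
        poch a (m + n) * poch b₂ n * (-1 : ℂ) ^ (m * k₁) * poch (-(t₁ : ℂ)) (m * k₁)
          * (-1 : ℂ) ^ (n * k₂) * poch (-(t₂ : ℂ)) (n * k₂) * X ^ m * Y ^ n
        / (poch c₁ m * poch c₂ n * (Nat.factorial m : ℂ) * (Nat.factorial n : ℂ))) :
    F2one a b₁ b₂ c₁ c₂ t₁ t₂ k₁ k₂ x y =
      (1 / Complex.Gamma b₁) *
        ∫ u in Set.Ioi (0 : ℝ),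
          Complex.exp (-(u : ℂ)) * (u : ℂ) ^ (b₁ - 1) * K ((u : ℂ) * x) y := by
  set C : ℕ → ℕ → ℂ := fun m n =>
    poch a (m + n) * poch b₂ n * (-1 : ℂ) ^ (m * k₁) * poch (-(t₁ : ℂ)) (m * k₁)
      * (-1 : ℂ) ^ (n * k₂) * poch (-(t₂ : ℂ)) (n * k₂) * x ^ m * y ^ n
    / (poch c₁ m * poch c₂ n * (Nat.factorial m : ℂ) * (Nat.factorial n : ℂ)) with hC
  have heq : Set.EqOn
      (fun u : ℝ => Complex.exp (-(u:ℂ)) * (u:ℂ) ^ (b₁-1) * K ((u:ℂ) * x) y)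
      (fun u : ℝ => ∑ m ∈ Finset.range (t₁ + 1), ∑ n ∈ Finset.range (t₂ + 1),
        (Complex.exp (-(u:ℂ)) * (u:ℂ) ^ (b₁-1) * (u:ℂ) ^ m) * C m n) (Set.Ioi 0) := by
    intro u _
    simp only [hK, Finset.mul_sum]
    refine Finset.sum_congr rfl fun m _ => Finset.sum_congr rfl fun n _ => ?_
    rw [hC]
    simp only [mul_pow]
    ring
  have hint : ∀ m n : ℕ,
      IntegrableOn (fun u : ℝ =>
        (Complex.exp (-(u:ℂ)) * (u:ℂ) ^ (b₁-1) * (u:ℂ) ^ m) * C m n) (Set.Ioi 0) :=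
    fun m n => ((gamma_int b₁ hb₁ m).1).mul_const _
  have hΓ : Complex.Gamma b₁ ≠ 0 := by
    apply Complex.Gamma_ne_zero
    intro m hm
    rw [hm] at hb₁
    simp only [Complex.neg_re, Complex.natCast_re] at hb₁
    have : (0:ℝ) ≤ (m:ℝ) := Nat.cast_nonneg m
    linarith
  rw [setIntegral_congr_fun measurableSet_Ioi heq,
    integral_finset_sum _ (fun m _ => integrable_finset_sum _ (fun n _ => hint m n))]
  have : ∀ m ∈ Finset.range (t₁ + 1),
      (∫ u in Set.Ioi (0:ℝ), ∑ n ∈ Finset.range (t₂ + 1),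
        (Complex.exp (-(u:ℂ)) * (u:ℂ) ^ (b₁-1) * (u:ℂ) ^ m) * C m n)
      = ∑ n ∈ Finset.range (t₂ + 1), (poch b₁ m * Complex.Gamma b₁) * C m n := by
    intro m _
    rw [integral_finset_sum _ (fun n _ => hint m n)]
    refine Finset.sum_congr rfl fun n _ => ?_
    rw [integral_mul_const, (gamma_int b₁ hb₁ m).2, gamma_poch b₁ hb₁ m]
  rw [Finset.sum_congr rfl this, F2one, Finset.mul_sum]
  refine Finset.sum_congr rfl fun m _ => ?_
  rw [Finset.mul_sum]
  refine Finset.sum_congr rfl fun n _ => ?_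
  have hcancel : (1 / Complex.Gamma b₁) * (poch b₁ m * Complex.Gamma b₁ * C m n)
      = poch b₁ m * C m n := by
    field_simp
  rw [hcancel, hC]
  ring
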